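/- arXiv:2310.01048 — 5 statements merged into one kernel-verified Lean document; each statement's English description precedes it below -/
import Mathlib

section
/- Existence of the corrector with gradient bounds (Proposition 1.2, existence part): Let μ ≥ 1, let ν, a : ℝ → ℝ be continuous with 1/μ ≤ ν(x) ≤ μ and 1/μ ≤ a(x) ≤ μ for all x, and let W be a real constant. Then there exists a differentiable function T : ℝ → ℝ with T(0) = 0 such that the function x ↦ a(x)ν(x)T'(x) is differentiable with derivative equal to W·T'(x) − W·ν(x) at every x (i.e. −(aνT')' + WT' = Wν pointwise on ℝ), and such that 1/μ⁵ ≤ T'(x) ≤ μ⁵ for all x ∈ ℝ (in particular |T(x)| ≤ μ⁵|x| for all x, so T(x)/|x| is bounded). -/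
open MeasureTheory Filter

/-- Two-sided ellipticity bounds `1/μ ≤ f ≤ μ`. -/
def Elliptic (μ : ℝ) (f : ℝ → ℝ) : Prop := ∀ x : ℝ, 1 / μ ≤ f x ∧ f x ≤ μ

/-- A classical solution of the canonical equation
`ν(x)∂ₜp − ∂ₓ(ν(x)a(x)∂ₓp) + W∂ₓp = 0` for every time `t ∈ s` and every `x ∈ ℝ`. -/
def IsCanonicalSolOn (ν a : ℝ → ℝ) (W : ℝ) (u : ℝ → ℝ → ℝ) (s : Set ℝ) : Prop :=
  ∃ ut ux q : ℝ → ℝ → ℝ, ∀ t ∈ s, ∀ x : ℝ,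
    HasDerivAt (fun τ => u τ x) (ut t x) t ∧
    HasDerivAt (fun ξ => u t ξ) (ux t x) x ∧
    HasDerivAt (fun ξ => ν ξ * a ξ * ux t ξ) (q t x) x ∧
    ν x * ut t x - q t x + W * ux t x = 0

/-- A corrector: `T(0) = 0`, `−(aνT')' + WT' = Wν` and `1/μ⁵ ≤ T' ≤ μ⁵`. -/
def IsCorrector (μ : ℝ) (ν a : ℝ → ℝ) (W : ℝ) (T : ℝ → ℝ) : Prop :=
  T 0 = 0 ∧ ∃ T' : ℝ → ℝ,
    (∀ x, HasDerivAt T (T' x) x) ∧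
    (∀ x, HasDerivAt (fun y => a y * ν y * T' y) (W * T' x - W * ν x) x) ∧
    (∀ x, 1 / μ ^ 5 ≤ T' x ∧ T' x ≤ μ ^ 5)

/-- An adjoint corrector: `T̃(0) = 0`, `(aνT̃')' + WT̃' = Wν` and `1/μ⁵ ≤ T̃' ≤ μ⁵`. -/
def IsAdjointCorrector (μ : ℝ) (ν a : ℝ → ℝ) (W : ℝ) (T : ℝ → ℝ) : Prop :=
  T 0 = 0 ∧ ∃ T' : ℝ → ℝ,
    (∀ x, HasDerivAt T (T' x) x) ∧
    (∀ x, HasDerivAt (fun y => a y * ν y * T' y) (W * ν x - W * T' x) x) ∧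
    (∀ x, 1 / μ ^ 5 ≤ T' x ∧ T' x ≤ μ ^ 5)

/-- A fundamental solution of the canonical equation. -/
def IsFundSol (ν a : ℝ → ℝ) (W : ℝ) (P : ℝ → ℝ → ℝ → ℝ) : Prop :=
  (∀ y : ℝ, IsCanonicalSolOn ν a W (fun t x => P t x y) (Set.Ioi 0)) ∧
  (∀ y : ℝ, ∀ t : ℝ, 0 < t → ∀ x : ℝ, 0 ≤ P t x y) ∧
  (∀ y : ℝ, ∀ t : ℝ, 0 < t → ∫ x : ℝ, ν x * P t x y = 1) ∧
  (∀ y : ℝ, ∀ φ : ℝ → ℝ, Continuous φ → (∃ B : ℝ, ∀ x, |φ x| ≤ B) →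
    Tendsto (fun t => ∫ x : ℝ, ν x * P t x y * φ x)
      (nhdsWithin 0 (Set.Ioi 0)) (nhds (φ y))) ∧
  (∀ s t : ℝ, 0 < s → 0 < t → ∀ x y : ℝ,
    P (t + s) x y = ∫ z : ℝ, ν z * P t x z * P s z y)

open Set Real

lemma my_integral_exp_neg_mul_Ioi {c : ℝ} (hc : 0 < c) (x : ℝ) :
    ∫ y in Set.Ioi x, Real.exp (-c * y) = Real.exp (-c * x) / c := by
  have hd : ∀ y ∈ Ici x, HasDerivAt (fun y => -(Real.exp (-c * y) / c)) (Real.exp (-c * y)) y := by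
    intro y _
    have h1 : HasDerivAt (fun y : ℝ => -c * y) (-c) y := by
      simpa using (hasDerivAt_id y).const_mul (-c)
    have h3 := (h1.exp.div_const c).neg
    exact h3.congr_deriv (by rw [mul_neg, neg_div, neg_neg, mul_div_assoc, div_self hc.ne', mul_one])
  have hten : Tendsto (fun y => -(Real.exp (-c * y) / c)) atTop (nhds 0) := by
    have h1 : Tendsto (fun y : ℝ => -c * y) atTop atBot := by
      apply Filter.Tendsto.const_mul_atTop_of_neg (neg_neg_iff_pos.mpr hc) tendsto_id
    have := (Real.tendsto_exp_atBot.comp h1).div_const c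
    simpa using this.neg
  have := integral_Ioi_of_hasDerivAt_of_tendsto' hd (exp_neg_integrableOn_Ioi x hc) hten
  rw [this]; ring

lemma corrector_exists_of_pos (μ : ℝ) (hμ : 1 ≤ μ) (ν a : ℝ → ℝ)
    (hνc : Continuous ν) (hac : Continuous a)
    (hν : Elliptic μ ν) (ha : Elliptic μ a) (W : ℝ) (hW : 0 < W) :
    ∃ T T' : ℝ → ℝ, T 0 = 0 ∧
      (∀ x, HasDerivAt T (T' x) x) ∧
      (∀ x, HasDerivAt (fun y => a y * ν y * T' y) (W * T' x - W * ν x) x) ∧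
      (∀ x, 1 / μ ^ 5 ≤ T' x ∧ T' x ≤ μ ^ 5) := by
  have hμ0 : (0:ℝ) < μ := lt_of_lt_of_le one_pos hμ
  have hν0 : ∀ x, 0 < ν x := fun x => lt_of_lt_of_le (by positivity) (hν x).1
  have ha0 : ∀ x, 0 < a x := fun x => lt_of_lt_of_le (by positivity) (ha x).1
  have haν : ∀ x, 1 / μ ^ 2 ≤ a x * ν x ∧ a x * ν x ≤ μ ^ 2 := by
    intro x
    constructor
    · calc 1 / μ ^ 2 = (1/μ) * (1/μ) := by ring
      _ ≤ a x * ν x := mul_le_mul (ha x).1 (hν x).1 (by positivity) (ha0 x).le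
    · calc a x * ν x ≤ μ * μ := mul_le_mul (ha x).2 (hν x).2 (hν0 x).le hμ0.le
      _ = μ ^ 2 := by ring
  have haν0 : ∀ x, 0 < a x * ν x := fun x => lt_of_lt_of_le (by positivity) (haν x).1
  set b : ℝ → ℝ := fun x => (a x * ν x)⁻¹ with hbdef
  have hb : ∀ x, 1 / μ ^ 2 ≤ b x ∧ b x ≤ μ ^ 2 := by
    intro x
    constructor
    · show (1:ℝ) / μ ^ 2 ≤ (a x * ν x)⁻¹
      rw [← one_div]
      exact one_div_le_one_div_of_le (haν0 x) (haν x).2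
    · show (a x * ν x)⁻¹ ≤ μ ^ 2
      calc (a x * ν x)⁻¹ ≤ (1 / μ^2)⁻¹ :=
        (inv_le_inv₀ (haν0 x) (by positivity)).mpr (haν x).1
      _ = μ ^ 2 := by field_simp
  have hb0 : ∀ x, 0 < b x := fun x => lt_of_lt_of_le (by positivity) (hb x).1
  have hbc : Continuous b := (hac.mul hνc).inv₀ (fun x => (haν0 x).ne')
  set B : ℝ → ℝ := fun x => ∫ t in (0:ℝ)..x, b t with hBdef
  have hB : ∀ x, HasDerivAt B (b x) x := fun x => (hbc.integral_hasStrictDerivAt 0 x).hasDerivAt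
  have hBc : Continuous B := by
    rw [continuous_iff_continuousAt]; exact fun x => (hB x).continuousAt
  have hBsub : ∀ x y : ℝ, B y - B x = ∫ t in x..y, b t := by
    intro x y
    have := intervalIntegral.integral_add_adjacent_intervals
      (μ := MeasureTheory.volume) (a := 0) (b := x) (c := y) (hbc.intervalIntegrable 0 x) (hbc.intervalIntegrable x y)
    rw [hBdef]; dsimp only; linarith [this]
  have hBlow : ∀ x y : ℝ, x ≤ y → (y - x) / μ ^ 2 ≤ B y - B x := by
    intro x y hxy
    rw [hBsub]
    have := intervalIntegral.integral_mono_on hxy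
      (intervalIntegrable_const (μ := MeasureTheory.volume) (c := 1 / μ^2)) (hbc.intervalIntegrable x y)
      (fun t _ => (hb t).1)
    simpa [smul_eq_mul, div_eq_mul_inv, mul_comm] using this
  have hBhigh : ∀ x y : ℝ, x ≤ y → B y - B x ≤ μ ^ 2 * (y - x) := by
    intro x y hxy
    rw [hBsub]
    have := intervalIntegral.integral_mono_on hxy
      (hbc.intervalIntegrable x y) (intervalIntegrable_const (μ := MeasureTheory.volume) (c := μ^2))
      (fun t _ => (hb t).2)
    simpa [smul_eq_mul, mul_comm] using this
  set f : ℝ → ℝ := fun y => ν y * Real.exp (-W * B y) with hfdef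
  have hfc : Continuous f := hνc.mul ((continuous_const.mul hBc).rexp)
  have hf0 : ∀ y, 0 < f y := fun y => mul_pos (hν0 y) (Real.exp_pos _)
  have hfub : ∀ x y : ℝ, x ≤ y →
      f y ≤ (μ * Real.exp (-W * B x + W / μ ^ 2 * x)) * Real.exp (-(W / μ ^ 2) * y) := by
    intro x y hxy
    have h1 : -W * B y ≤ -W * B x + W / μ ^ 2 * x + -(W / μ ^ 2) * y := by
      have h0 := hBlow x y hxy
      have h2 : W * ((y - x) / μ ^ 2) ≤ W * (B y - B x) :=
        mul_le_mul_of_nonneg_left h0 hW.le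
      have h3 : W * ((y - x) / μ ^ 2) = W / μ ^ 2 * y - W / μ ^ 2 * x := by ring
      linarith
    calc f y ≤ μ * Real.exp (-W * B y) :=
        mul_le_mul_of_nonneg_right (hν y).2 (Real.exp_pos _).le
    _ ≤ μ * Real.exp (-W * B x + W / μ ^ 2 * x + -(W / μ ^ 2) * y) :=
        mul_le_mul_of_nonneg_left (Real.exp_le_exp.mpr h1) hμ0.le
    _ = (μ * Real.exp (-W * B x + W / μ ^ 2 * x)) * Real.exp (-(W / μ ^ 2) * y) := by
        rw [mul_assoc, ← Real.exp_add]
  have hflb : ∀ x y : ℝ, x ≤ y →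
      ((1/μ) * Real.exp (-W * B x + W * μ ^ 2 * x)) * Real.exp (-(W * μ ^ 2) * y) ≤ f y := by
    intro x y hxy
    have h1 : -W * B x + W * μ ^ 2 * x + -(W * μ ^ 2) * y ≤ -W * B y := by
      have h0 := hBhigh x y hxy
      have h2 : W * (B y - B x) ≤ W * (μ ^ 2 * (y - x)) :=
        mul_le_mul_of_nonneg_left h0 hW.le
      have h3 : W * (μ ^ 2 * (y - x)) = W * μ ^ 2 * y - W * μ ^ 2 * x := by ring
      linarith
    calc ((1/μ) * Real.exp (-W * B x + W * μ ^ 2 * x)) * Real.exp (-(W * μ ^ 2) * y)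
        = (1/μ) * Real.exp (-W * B x + W * μ ^ 2 * x + -(W * μ ^ 2) * y) := by
          rw [mul_assoc, ← Real.exp_add]
    _ ≤ (1/μ) * Real.exp (-W * B y) :=
        mul_le_mul_of_nonneg_left (Real.exp_le_exp.mpr h1) (by positivity)
    _ ≤ f y := mul_le_mul_of_nonneg_right (hν y).1 (Real.exp_pos _).le
  have hWμ : 0 < W / μ ^ 2 := by positivity
  have hWμ2 : 0 < W * μ ^ 2 := by positivity
  have hfint : ∀ x : ℝ, IntegrableOn f (Ioi x) := by
    intro x
    have hmaj : IntegrableOn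
        (fun y => (μ * Real.exp (-W * B x + W / μ ^ 2 * x)) * Real.exp (-(W / μ ^ 2) * y))
        (Ioi x) := (exp_neg_integrableOn_Ioi x hWμ).const_mul _
    refine hmaj.integrable.mono' (hfc.aestronglyMeasurable.restrict) ?_
    filter_upwards [ae_restrict_mem measurableSet_Ioi] with y hy
    rw [Real.norm_eq_abs, abs_of_pos (hf0 y)]
    exact hfub x y (le_of_lt hy)
  set I : ℝ → ℝ := fun x => ∫ y in Ioi x, f y with hIdef
  have hIadd : ∀ u v : ℝ, u ≤ v → I u = (∫ t in u..v, f t) + I v := by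
    intro u v huv
    have hdisj : Disjoint (Ioc u v) (Ioi v) := by
      apply Set.disjoint_left.mpr
      intro z hz1 hz2
      exact absurd hz1.2 (not_le.mpr hz2)
    have hunion : Ioc u v ∪ Ioi v = Ioi u := Ioc_union_Ioi_eq_Ioi huv
    have h1 : IntegrableOn f (Ioc u v) := (hfint u).mono_set Ioc_subset_Ioi_self
    have h2 := setIntegral_union hdisj measurableSet_Ioi h1 (hfint v) (f := f) (μ := volume)
    rw [hunion] at h2
    rw [hIdef]; dsimp only
    rw [h2, intervalIntegral.integral_of_le huv]
  have hIsplit : ∀ x : ℝ, I x = I 0 - ∫ t in (0:ℝ)..x, f t := by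
    intro x
    rcases le_total 0 x with h | h
    · have := hIadd 0 x h; linarith
    · have := hIadd x 0 h
      rw [intervalIntegral.integral_symm] at this
      linarith
  have hI' : ∀ x, HasDerivAt I (-(f x)) x := by
    intro x
    have h0 : HasDerivAt (fun x => ∫ t in (0:ℝ)..x, f t) (f x) x :=
      (hfc.integral_hasStrictDerivAt 0 x).hasDerivAt
    have h1 : HasDerivAt (fun x => I 0 - ∫ t in (0:ℝ)..x, f t) (-(f x)) x := h0.const_sub (I 0)
    have e : I = fun x => I 0 - ∫ t in (0:ℝ)..x, f t := funext hIsplit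
    rw [e]; exact h1
  have hIc : Continuous I := by
    rw [continuous_iff_continuousAt]; exact fun x => (hI' x).continuousAt
  have hIup : ∀ x : ℝ, I x ≤ μ ^ 3 / W * Real.exp (-W * B x) := by
    intro x
    have hcomp : I x ≤ ∫ y in Ioi x,
        (μ * Real.exp (-W * B x + W / μ ^ 2 * x)) * Real.exp (-(W / μ ^ 2) * y) := by
      apply setIntegral_mono_on (hfint x)
        ((exp_neg_integrableOn_Ioi x hWμ).const_mul _) measurableSet_Ioi
      intro y hy
      exact hfub x y (le_of_lt hy)
    rw [MeasureTheory.integral_const_mul, my_integral_exp_neg_mul_Ioi hWμ x] at hcomp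
    have e1 : Real.exp (-W * B x + W / μ ^ 2 * x) * Real.exp (-(W / μ ^ 2) * x)
        = Real.exp (-W * B x) := by
      rw [← Real.exp_add]; congr 1; ring
    calc I x ≤ (μ * Real.exp (-W * B x + W / μ ^ 2 * x)) *
        (Real.exp (-(W / μ ^ 2) * x) / (W / μ ^ 2)) := hcomp
    _ = μ * (Real.exp (-W * B x + W / μ ^ 2 * x) * Real.exp (-(W / μ ^ 2) * x)) / (W / μ ^ 2) := by
        ring
    _ = μ * Real.exp (-W * B x) / (W / μ ^ 2) := by rw [e1]
    _ = μ ^ 3 / W * Real.exp (-W * B x) := by field_simp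
  have hIlow : ∀ x : ℝ, 1 / (μ ^ 3 * W) * Real.exp (-W * B x) ≤ I x := by
    intro x
    have hcomp : (∫ y in Ioi x,
        ((1/μ) * Real.exp (-W * B x + W * μ ^ 2 * x)) * Real.exp (-(W * μ ^ 2) * y)) ≤ I x := by
      apply setIntegral_mono_on
        ((exp_neg_integrableOn_Ioi x hWμ2).const_mul _) (hfint x) measurableSet_Ioi
      intro y hy
      exact hflb x y (le_of_lt hy)
    rw [MeasureTheory.integral_const_mul, my_integral_exp_neg_mul_Ioi hWμ2 x] at hcomp
    have e1 : Real.exp (-W * B x + W * μ ^ 2 * x) * Real.exp (-(W * μ ^ 2) * x)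
        = Real.exp (-W * B x) := by
      rw [← Real.exp_add]; congr 1; ring
    calc 1 / (μ ^ 3 * W) * Real.exp (-W * B x)
        = (1/μ) * (Real.exp (-W * B x + W * μ ^ 2 * x) * Real.exp (-(W * μ ^ 2) * x))
          / (W * μ ^ 2) := by rw [e1]; field_simp
    _ = ((1/μ) * Real.exp (-W * B x + W * μ ^ 2 * x)) *
          (Real.exp (-(W * μ ^ 2) * x) / (W * μ ^ 2)) := by ring
    _ ≤ I x := hcomp
  set g : ℝ → ℝ := fun x => W * Real.exp (W * B x) * I x with hgdef
  have hexp1 : ∀ x : ℝ, Real.exp (W * B x) * Real.exp (-W * B x) = 1 := by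
    intro x
    rw [← Real.exp_add, show W * B x + -W * B x = 0 by ring, Real.exp_zero]
  have hgup : ∀ x, g x ≤ μ ^ 3 := by
    intro x
    have h1 : W * Real.exp (W * B x) * I x
        ≤ W * Real.exp (W * B x) * (μ ^ 3 / W * Real.exp (-W * B x)) :=
      mul_le_mul_of_nonneg_left (hIup x) (by positivity)
    calc g x ≤ W * Real.exp (W * B x) * (μ ^ 3 / W * Real.exp (-W * B x)) := h1
    _ = μ ^ 3 * (Real.exp (W * B x) * Real.exp (-W * B x)) := by field_simp
    _ = μ ^ 3 := by rw [hexp1]; ring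
  have hglow : ∀ x, 1 / μ ^ 3 ≤ g x := by
    intro x
    have h1 : W * Real.exp (W * B x) * (1 / (μ ^ 3 * W) * Real.exp (-W * B x))
        ≤ W * Real.exp (W * B x) * I x :=
      mul_le_mul_of_nonneg_left (hIlow x) (by positivity)
    calc (1:ℝ) / μ ^ 3 = 1 / μ ^ 3 * (Real.exp (W * B x) * Real.exp (-W * B x)) := by
          rw [hexp1]; ring
    _ = W * Real.exp (W * B x) * (1 / (μ ^ 3 * W) * Real.exp (-W * B x)) := by
          field_simp
    _ ≤ g x := h1
  have hg0 : ∀ x, 0 < g x := fun x => lt_of_lt_of_le (by positivity) (hglow x)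
  have hgc : Continuous g :=
    (continuous_const.mul ((continuous_const.mul hBc).rexp)).mul hIc
  have hg' : ∀ x, HasDerivAt g (W * (b x * g x) - W * ν x) x := by
    intro x
    have h1 : HasDerivAt (fun x => W * B x) (W * b x) x := (hB x).const_mul W
    have h2 := h1.exp
    have h3 := (h2.const_mul W).mul (hI' x)
    refine h3.congr_deriv (Eq.symm ?_)
    show W * (b x * g x) - W * ν x
      = W * (Real.exp (W * B x) * (W * b x)) * I x + W * Real.exp (W * B x) * -(f x)
    rw [hgdef, hfdef]
    dsimp only
    have e := hexp1 x
    linear_combination (W * ν x) * e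
  set T' : ℝ → ℝ := fun x => b x * g x with hT'def
  have hT'c : Continuous T' := hbc.mul hgc
  set T : ℝ → ℝ := fun x => ∫ t in (0:ℝ)..x, T' t with hTdef
  refine ⟨T, T', ?_, ?_, ?_, ?_⟩
  · rw [hTdef]; dsimp only; exact intervalIntegral.integral_same
  · exact fun x => (hT'c.integral_hasStrictDerivAt 0 x).hasDerivAt
  · intro x
    have hfunc : (fun y => a y * ν y * T' y) = g := by
      funext y
      show a y * ν y * ((a y * ν y)⁻¹ * g y) = g y
      rw [← mul_assoc, mul_inv_cancel₀ (haν0 y).ne', one_mul]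
    rw [hfunc]
    exact hg' x
  · intro x
    constructor
    · have h5 : (1:ℝ) / μ ^ 5 = (1 / μ ^ 2) * (1 / μ ^ 3) := by
        rw [div_mul_div_comm]; norm_num; ring
      rw [h5]
      exact mul_le_mul (hb x).1 (hglow x) (by positivity) (hb0 x).le
    · have h5 : (μ:ℝ) ^ 5 = μ ^ 2 * μ ^ 3 := by ring
      rw [h5]
      exact mul_le_mul (hb x).2 (hgup x) (hg0 x).le (by positivity)

/-- Proposition 1.2 (existence part): there exists a corrector `T`, i.e. a differentiable
function with `T(0) = 0`, `−(aνT')' + WT' = Wν` pointwise, and `1/μ⁵ ≤ T' ≤ μ⁵`. -/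
theorem corrector_exists (μ : ℝ) (hμ : 1 ≤ μ) (ν a : ℝ → ℝ)
    (hνc : Continuous ν) (hac : Continuous a)
    (hν : Elliptic μ ν) (ha : Elliptic μ a) (W : ℝ) :
    ∃ T T' : ℝ → ℝ, T 0 = 0 ∧
      (∀ x, HasDerivAt T (T' x) x) ∧
      (∀ x, HasDerivAt (fun y => a y * ν y * T' y) (W * T' x - W * ν x) x) ∧
      (∀ x, 1 / μ ^ 5 ≤ T' x ∧ T' x ≤ μ ^ 5) := by
  have hμ0 : (0:ℝ) < μ := lt_of_lt_of_le one_pos hμ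
  have hν0 : ∀ x, 0 < ν x := fun x => lt_of_lt_of_le (by positivity) (hν x).1
  have ha0 : ∀ x, 0 < a x := fun x => lt_of_lt_of_le (by positivity) (ha x).1
  have haν0 : ∀ x, 0 < a x * ν x := fun x => mul_pos (ha0 x) (hν0 x)
  rcases lt_trichotomy W 0 with hW | hW | hW
  · -- W < 0 : reflect
    obtain ⟨S, S', hS0, hSd, hSpde, hSb⟩ :=
      corrector_exists_of_pos μ hμ (fun x => ν (-x)) (fun x => a (-x))
        (hνc.comp continuous_neg) (hac.comp continuous_neg)
        (fun x => hν (-x)) (fun x => ha (-x)) (-W) (by linarith)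
    refine ⟨fun x => -S (-x), fun x => S' (-x), by simp [hS0], ?_, ?_, fun x => hSb (-x)⟩
    · intro x
      have h := ((hSd (-x)).comp x (hasDerivAt_neg x)).neg
      exact h.congr_deriv (by simp)
    · intro x
      have h := (hSpde (-x)).comp x (hasDerivAt_neg x)
      have hfun : ((fun y => a (-y) * ν (-y) * S' y) ∘ fun y : ℝ => -y)
          = fun y => a y * ν y * S' (-y) := by
        funext y; simp [Function.comp]
      rw [hfun] at h
      refine h.congr_deriv ?_
      simp only [neg_neg]
      ring
  · -- W = 0
    have hbc : Continuous fun x => (a x * ν x)⁻¹ := (hac.mul hνc).inv₀ fun x => (haν0 x).ne'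
    refine ⟨fun x => ∫ t in (0:ℝ)..x, (a t * ν t)⁻¹, fun x => (a x * ν x)⁻¹,
      intervalIntegral.integral_same, ?_, ?_, ?_⟩
    · exact fun x => (hbc.integral_hasStrictDerivAt 0 x).hasDerivAt
    · intro x
      have hfun : (fun y => a y * ν y * (a y * ν y)⁻¹) = fun _ : ℝ => (1:ℝ) := by
        funext y; rw [mul_inv_cancel₀ (haν0 y).ne']
      rw [hfun, hW]
      simpa using hasDerivAt_const x (1:ℝ)
    · intro x
      have hup : a x * ν x ≤ μ ^ 2 := by
        calc a x * ν x ≤ μ * μ := mul_le_mul (ha x).2 (hν x).2 (hν0 x).le hμ0.le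
        _ = μ ^ 2 := by ring
      have hlo : 1 / μ ^ 2 ≤ a x * ν x := by
        calc (1:ℝ) / μ ^ 2 = (1/μ) * (1/μ) := by ring
        _ ≤ a x * ν x := mul_le_mul (ha x).1 (hν x).1 (by positivity) (ha0 x).le
      have h2 : 1 / μ ^ 2 ≤ (a x * ν x)⁻¹ ∧ (a x * ν x)⁻¹ ≤ μ ^ 2 := by
        constructor
        · rw [← one_div]
          exact one_div_le_one_div_of_le (haν0 x) hup
        · calc (a x * ν x)⁻¹ ≤ (1 / μ ^ 2)⁻¹ := (inv_le_inv₀ (haν0 x) (by positivity)).mpr hlo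
          _ = μ ^ 2 := by field_simp
      constructor
      · calc (1:ℝ) / μ ^ 5 ≤ 1 / μ ^ 2 :=
            one_div_le_one_div_of_le (by positivity) (pow_le_pow_right₀ hμ (by norm_num))
        _ ≤ (a x * ν x)⁻¹ := h2.1
      · calc (a x * ν x)⁻¹ ≤ μ ^ 2 := h2.2
        _ ≤ μ ^ 5 := pow_le_pow_right₀ hμ (by norm_num)
  · exact corrector_exists_of_pos μ hμ ν a hνc hac hν ha W hW
end

section
/- The travelling corrector profile solves the canonical equation (Lemma 2.4): Let μ ≥ 1, ν, a : ℝ → ℝ continuous with 1/μ ≤ ν(x) ≤ μ and 1/μ ≤ a(x) ≤ μ for all x, W ≥ 0 a real constant, and let T be a corrector; set m := 1/μ⁵ and M := μ⁵, define f(t,x) := T(x) − W t, and for t, y ∈ ℝ let X(t;y) be the unique real with T(X(t;y)) = T(y) + W t. Then: (i) f is a classical solution of the canonical equation on ℝ × ℝ, i.e. ν(x)∂ₜf − ∂ₓ(ν(x)a(x)∂ₓf) + W∂ₓf = 0 for all t, x; (ii) for each t, y ∈ ℝ, X(t;y) is the unique real x with f(t,x) = f(0,y); (iii) m|x| ≤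 |f(t, x + X(t;y)) − f(0,y)| ≤ M|x| for all t, x, y ∈ ℝ; (iv) for each y the map t ↦ X(t;y) is differentiable with W/M ≤ ∂ₜX(t;y) ≤ W/m for all t. -/
open MeasureTheory Filter

lemma deriv_sandwich {T T' : ℝ → ℝ} {m M : ℝ}
    (hd : ∀ x, HasDerivAt T (T' x) x) (hm : ∀ x, m ≤ T' x) (hM : ∀ x, T' x ≤ M) :
    ∀ p q : ℝ, p ≤ q → m * (q - p) ≤ T q - T p ∧ T q - T p ≤ M * (q - p) := by
  intro p q hpq
  constructor
  · -- T x - m x is monotone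
    have hmono : Monotone (fun x => T x - m * x) := by
      apply monotone_of_deriv_nonneg
      · exact fun x => ((hd x).sub ((hasDerivAt_id x).const_mul m)).differentiableAt
      · intro x
        have : HasDerivAt (fun x => T x - m * x) (T' x - m * 1) x :=
          (hd x).sub ((hasDerivAt_id x).const_mul m)
        rw [this.deriv]
        linarith [hm x]
    have := hmono hpq
    simp only at this
    linarith
  · have hmono : Monotone (fun x => M * x - T x) := by
      apply monotone_of_deriv_nonneg
      · exact fun x => (((hasDerivAt_id x).const_mul M).sub (hd x)).differentiableAt
      · intro x
        have : HasDerivAt (fun x => M * x - T x) (M * 1 - T' x) x :=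
          ((hasDerivAt_id x).const_mul M).sub (hd x)
        rw [this.deriv]
        linarith [hM x]
    have := hmono hpq
    simp only at this
    linarith

lemma abs_sandwich {T T' : ℝ → ℝ} {m M : ℝ} (hm0 : 0 ≤ m)
    (hd : ∀ x, HasDerivAt T (T' x) x) (hm : ∀ x, m ≤ T' x) (hM : ∀ x, T' x ≤ M) :
    ∀ p q : ℝ, m * |q - p| ≤ |T q - T p| ∧ |T q - T p| ≤ M * |q - p| := by
  intro p q
  rcases le_total p q with h | h
  · obtain ⟨h1, h2⟩ := deriv_sandwich hd hm hM p q h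
    rw [abs_of_nonneg (by linarith), abs_of_nonneg (by nlinarith)]
    exact ⟨h1, h2⟩
  · obtain ⟨h1, h2⟩ := deriv_sandwich hd hm hM q p h
    rw [abs_of_nonpos (by linarith), abs_of_nonpos (by nlinarith)]
    constructor <;> nlinarith

/-- Lemma 2.4: the profile `f(t,x) = T(x) − Wt` built from a corrector `T` is a global
classical solution of the canonical equation; `X(t;y)` is the unique root of
`f(t,·) − f(0,y)`; `m|x| ≤ |f(t, x + X(t;y)) − f(0,y)| ≤ M|x|` with `m = 1/μ⁵`,
`M = μ⁵`; and `t ↦ X(t;y)` is differentiable with `W/M ≤ ∂ₜX ≤ W/m`. -/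
theorem corrector_profile_solution (μ : ℝ) (hμ : 1 ≤ μ) (ν a : ℝ → ℝ)
    (hνc : Continuous ν) (hac : Continuous a)
    (hν : Elliptic μ ν) (ha : Elliptic μ a) (W : ℝ) (hW : 0 ≤ W)
    (T : ℝ → ℝ) (hT : IsCorrector μ ν a W T)
    (X : ℝ → ℝ → ℝ) (hX : ∀ t y : ℝ, T (X t y) = T y + W * t) :
    IsCanonicalSolOn ν a W (fun t x => T x - W * t) Set.univ ∧
    (∀ t y x : ℝ, (T x - W * t = T y - W * 0) ↔ x = X t y) ∧
    (∀ t x y : ℝ,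
      1 / μ ^ 5 * |x| ≤ |(T (x + X t y) - W * t) - (T y - W * 0)| ∧
      |(T (x + X t y) - W * t) - (T y - W * 0)| ≤ μ ^ 5 * |x|) ∧
    (∃ X' : ℝ → ℝ → ℝ, ∀ t y : ℝ,
      HasDerivAt (fun τ => X τ y) (X' t y) t ∧
      W / μ ^ 5 ≤ X' t y ∧ X' t y ≤ W / (1 / μ ^ 5)) := by
  obtain ⟨hT0, T', hT'd, hTeq, hT'b⟩ := hT
  have hμ0 : (0:ℝ) < μ := lt_of_lt_of_le one_pos hμ
  have hM0 : (0:ℝ) < μ ^ 5 := by positivity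
  have hm0 : (0:ℝ) < 1 / μ ^ 5 := by positivity
  have hmle : ∀ x, 1 / μ ^ 5 ≤ T' x := fun x => (hT'b x).1
  have hMle : ∀ x, T' x ≤ μ ^ 5 := fun x => (hT'b x).2
  -- strict monotonicity / injectivity of T
  have hsm : StrictMono T := by
    intro p q hpq
    have := (deriv_sandwich hT'd hmle hMle p q hpq.le).1
    nlinarith
  have hinj : Function.Injective T := hsm.injective
  -- surjectivity of T
  have hTcont : Continuous T := continuous_iff_continuousAt.2 fun x => (hT'd x).continuousAt
  refine ⟨?_, ?_, ?_, ?_⟩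
  · -- (i)
    refine ⟨fun t x => -W, fun t x => T' x, fun t x => W * T' x - W * ν x, ?_⟩
    intro t _ x
    refine ⟨?_, ?_, ?_, by ring⟩
    · exact ((hasDerivAt_const t (T x)).sub ((hasDerivAt_id t).const_mul W)).congr_deriv (by ring)
    · exact ((hT'd x).sub (hasDerivAt_const x (W * t))).congr_deriv (by ring)
    · have h := hTeq x
      have : (fun ξ => ν ξ * a ξ * T' ξ) = fun y => a y * ν y * T' y := by
        funext y; ring
      rw [this]; exact h
  · -- (ii)
    intro t y x
    constructor
    · intro h
      apply hinj
      rw [hX t y]; linarith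
    · rintro rfl
      rw [hX t y]; ring
  · -- (iii)
    intro t x y
    have key : (T (x + X t y) - W * t) - (T y - W * 0) = T (x + X t y) - T (X t y) := by
      rw [hX t y]; ring
    rw [key]
    have := abs_sandwich hm0.le hT'd hmle hMle (X t y) (x + X t y)
    simpa using this
  · -- (iv)
    have hsurj : Function.Surjective T := by
      apply hTcont.surjective
      · apply tendsto_atTop_mono' _ _ (tendsto_atTop_add_const_left atTop (T 0)
          (tendsto_id.const_mul_atTop hm0))
        filter_upwards [eventually_ge_atTop (0:ℝ)] with x hx
        have := (deriv_sandwich hT'd hmle hMle 0 x hx).1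
        simp only [id]
        linarith
      · rw [tendsto_atBot]
        intro b
        filter_upwards [eventually_le_atBot (min 0 ((b - T 0) * μ ^ 5))] with x hx
        have hx0 : x ≤ 0 := le_trans hx (min_le_left _ _)
        have := (deriv_sandwich hT'd hmle hMle x 0 hx0).1
        have hx1 : x ≤ (b - T 0) * μ ^ 5 := le_trans hx (min_le_right _ _)
        have : 1 / μ ^ 5 * (0 - x) ≤ T 0 - T x := this
        have h2 : 1 / μ ^ 5 * (0 - x) ≥ T 0 - b := by
          rw [ge_iff_le, div_mul_eq_mul_div, le_div_iff₀ hM0]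
          nlinarith
        linarith
    set e : ℝ ≃o ℝ := StrictMono.orderIsoOfSurjective T hsm hsurj with he
    have heT : ∀ x, e x = T x := fun x => rfl
    have hXe : ∀ t y, X t y = e.symm (T y + W * t) := by
      intro t y
      apply hinj
      rw [hX t y]
      exact (e.apply_symm_apply _).symm
    refine ⟨fun t y => W / T' (X t y), ?_⟩
    intro t y
    have hT'pos : 0 < T' (X t y) := lt_of_lt_of_le hm0 (hmle _)
    refine ⟨?_, ?_, ?_⟩
    · show HasDerivAt (fun τ => X τ y) (W / T' (X t y)) t
      have hfun : (fun τ => X τ y) = fun τ => e.symm (T y + W * τ) := by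
        funext τ; exact hXe τ y
      rw [hfun]
      have hcs : Continuous (e.symm : ℝ → ℝ) := OrderIso.continuous e.symm
      have hinv : HasDerivAt (e.symm : ℝ → ℝ) (T' (e.symm (T y + W * t)))⁻¹ (T y + W * t) := by
        apply HasDerivAt.of_local_left_inverse hcs.continuousAt
          (hT'd _) (ne_of_gt (lt_of_lt_of_le hm0 (hmle _)))
        filter_upwards with s
        rw [← heT]; exact e.apply_symm_apply s
      have hcomp := hinv.comp t (((hasDerivAt_id t).const_mul W).const_add (T y))
      simp only [mul_one] at hcomp
      have : (T' (e.symm (T y + W * t)))⁻¹ * W = W / T' (X t y) := by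
        rw [hXe t y]; field_simp
      rw [← this]
      exact hcomp
    · show W / μ ^ 5 ≤ W / T' (X t y)
      gcongr
      exact hMle _
    · show W / T' (X t y) ≤ W / (1 / μ ^ 5)
      gcongr
      exact hmle _
end

section
/- Comparison of the corrector and the adjoint corrector (Lemma 2.5): Let μ ≥ 1, ν, a : ℝ → ℝ continuous with 1/μ ≤ ν(x) ≤ μ and 1/μ ≤ a(x) ≤ μ for all x, W > 0, let T be a corrector and T̃ an adjoint corrector, set m := 1/μ⁵ and τ := 4μ⁷/W, and let X(t;y), Y(t;y) be the associated flows. Then |T(x) − T̃(x)| ≤ τ for all x ∈ ℝ, and |X(t;y) − Y(t;y)| ≤ 2τ/m for all t, y ∈ ℝ. -/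
open MeasureTheory Filter

/-- Lemma 2.5: comparison of the corrector and the adjoint corrector:
`|T − T̃| ≤ τ` with `τ = 4μ⁷/W`, and `|X(t;y) − Y(t;y)| ≤ 2τ/m` with `m = 1/μ⁵`. -/
theorem corrector_adjoint_comparison (μ : ℝ) (hμ : 1 ≤ μ) (ν a : ℝ → ℝ)
    (hνc : Continuous ν) (hac : Continuous a)
    (hν : Elliptic μ ν) (ha : Elliptic μ a) (W : ℝ) (hW : 0 < W)
    (T Tt : ℝ → ℝ) (hT : IsCorrector μ ν a W T) (hTt : IsAdjointCorrector μ ν a W Tt)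
    (X Y : ℝ → ℝ → ℝ)
    (hX : ∀ t y : ℝ, T (X t y) = T y + W * t)
    (hY : ∀ t y : ℝ, Tt (Y t y) = Tt y + W * t) :
    (∀ x : ℝ, |T x - Tt x| ≤ 4 * μ ^ 7 / W) ∧
    (∀ t y : ℝ, |X t y - Y t y| ≤ 2 * (4 * μ ^ 7 / W) / (1 / μ ^ 5)) := by
  obtain ⟨hT0, T', hT'd, hTq, hT'b⟩ := hT
  obtain ⟨hTt0, S', hS'd, hSq, hS'b⟩ := hTt
  have hμ0 : (0:ℝ) < μ := lt_of_lt_of_le one_pos hμ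
  have hμ5 : (0:ℝ) < μ ^ 5 := pow_pos hμ0 5
  have hμ7 : (0:ℝ) < μ ^ 7 := pow_pos hμ0 7
  set F : ℝ → ℝ := fun x => a x * ν x * T' x + a x * ν x * S' x with hFdef
  have hFd : ∀ x, HasDerivAt F (W * T' x - W * S' x) x := by
    intro x
    have h := (hTq x).add (hSq x)
    refine h.congr_deriv ?_
    ring
  have hprod : ∀ (f : ℝ → ℝ), (∀ x, 1/μ^5 ≤ f x ∧ f x ≤ μ^5) →
      ∀ x, 0 ≤ a x * ν x * f x ∧ a x * ν x * f x ≤ μ ^ 7 := by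
    intro f hf x
    have haL := (ha x).1; have haU := (ha x).2
    have hνL := (hν x).1; have hνU := (hν x).2
    have hfL := (hf x).1; have hfU := (hf x).2
    have h1 : (0:ℝ) < 1/μ := by positivity
    have h2 : (0:ℝ) < 1/μ^5 := by positivity
    have hap : 0 < a x := lt_of_lt_of_le h1 haL
    have hνp : 0 < ν x := lt_of_lt_of_le h1 hνL
    have hfp : 0 < f x := lt_of_lt_of_le h2 hfL
    constructor
    · positivity
    · calc a x * ν x * f x ≤ μ * μ * μ ^ 5 := by
            apply mul_le_mul (mul_le_mul haU hνU hνp.le (le_trans hνp.le hνU)) hfU hfp.le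
            positivity
        _ = μ ^ 7 := by ring
  have hFbd : ∀ x, 0 ≤ F x ∧ F x ≤ 2 * μ ^ 7 := by
    intro x
    have h1 := hprod T' hT'b x
    have h2 := hprod S' hS'b x
    constructor <;> simp only [hFdef] <;> linarith
  have hkey : ∀ x : ℝ, W * (T x - Tt x) = F x - F 0 := by
    intro x
    have hdiff : ∀ y : ℝ, HasDerivAt (fun z => W * (T z - Tt z) - (F z - F 0)) 0 y := by
      intro y
      have h1 := ((hT'd y).sub (hS'd y)).const_mul W
      have h2 := (hFd y).sub_const (F 0)
      have h := h1.sub h2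
      refine h.congr_deriv ?_
      ring
    have hconst := is_const_of_deriv_eq_zero
      (f := fun z => W * (T z - Tt z) - (F z - F 0))
      (fun y => (hdiff y).differentiableAt) (fun y => (hdiff y).deriv) x 0
    simp only [hT0, hTt0] at hconst
    linarith [hconst]
  have part1 : ∀ x : ℝ, |T x - Tt x| ≤ 4 * μ ^ 7 / W := by
    intro x
    rw [le_div_iff₀ hW]
    have h1 := hFbd x
    have h2 := hFbd 0
    have h3 := hkey x
    have : |T x - Tt x| * W = |W * (T x - Tt x)| := by
      rw [abs_mul, abs_of_pos hW]; ring
    rw [this, h3, abs_sub_le_iff]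
    constructor <;> linarith
  refine ⟨part1, ?_⟩
  -- lower bound on increments of T
  have hmono : Monotone (fun x => T x - 1/μ^5 * x) := by
    have hd : ∀ x : ℝ, HasDerivAt (fun z => T z - 1/μ^5 * z) (T' x - 1/μ^5) x := by
      intro x
      have h := (hT'd x).sub ((hasDerivAt_id x).const_mul (1/μ^5))
      refine h.congr_deriv ?_
      ring
    apply monotone_of_deriv_nonneg
    · exact fun x => ((hd x).differentiableAt)
    · intro x
      rw [(hd x).deriv]
      have := (hT'b x).1
      linarith
  have hincr : ∀ u v : ℝ, 1/μ^5 * |u - v| ≤ |T u - T v| := by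
    have hstep : ∀ u v : ℝ, v ≤ u → 1/μ^5 * (u - v) ≤ T u - T v := by
      intro u v h
      have := hmono h
      simp only at this
      linarith
    intro u v
    rcases le_total v u with h | h
    · have h1 := hstep u v h
      have h2 : (0:ℝ) < 1/μ^5 := by positivity
      rw [abs_of_nonneg (sub_nonneg.2 h), abs_of_nonneg]
      · exact h1
      · nlinarith
    · have h1 := hstep v u h
      have h2 : (0:ℝ) < 1/μ^5 := by positivity
      rw [abs_sub_comm, abs_sub_comm (T u), abs_of_nonneg (sub_nonneg.2 h), abs_of_nonneg]
      · exact h1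
      · nlinarith
  intro t y
  set x := X t y
  set z := Y t y
  have hTx : T x = T y + W * t := hX t y
  have hTtz : Tt z = Tt y + W * t := hY t y
  have hdiff : T x - T z = (T y - Tt y) - (T z - Tt z) := by
    rw [hTx]
    linarith [hTtz]
  have hbd : |T x - T z| ≤ 2 * (4 * μ ^ 7 / W) := by
    rw [hdiff]
    calc |(T y - Tt y) - (T z - Tt z)| ≤ |T y - Tt y| + |T z - Tt z| := abs_sub _ _
      _ ≤ 2 * (4 * μ ^ 7 / W) := by linarith [part1 y, part1 z]
  have h2 : (0:ℝ) < 1/μ^5 := by positivity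
  rw [le_div_iff₀ h2]
  calc |x - z| * (1/μ^5) = 1/μ^5 * |x - z| := by ring
    _ ≤ |T x - T z| := hincr x z
    _ ≤ 2 * (4 * μ ^ 7 / W) := hbd
end

section
/- Comparison of the forward and adjoint profiles (Lemma 2.6): For every real μ ≥ 1 there exists a constant C > 0, independent of W, such that the following holds: for all continuous ν, a : ℝ → ℝ with 1/μ ≤ ν(x) ≤ μ and 1/μ ≤ a(x) ≤ μ for all x, every real W > 0, every corrector T and every adjoint corrector T̃, setting f(t,x) := T(x) − Wt and g(t,x) := T̃(x) − Wt, one has |f(t,x) − f(0,y)| ≤ C|g(t,x) − g(0,y)| + C√t for all t > 0 and all x, y ∈ ℝ. -/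
open MeasureTheory Filter

/-- Helper: if `f` has derivative `f' ≥ c` everywhere then `c*(y-x) ≤ f y - f x` for `x ≤ y`. -/
private lemma deriv_ge_mono {f f' : ℝ → ℝ} (hd : ∀ x, HasDerivAt f (f' x) x) {c : ℝ}
    (h : ∀ x, c ≤ f' x) {x y : ℝ} (hxy : x ≤ y) : c * (y - x) ≤ f y - f x := by
  have hder : ∀ z : ℝ, HasDerivAt (fun w => f w - c * w) (f' z - c) z := by
    intro z
    exact (by simpa using (hd z).sub ((hasDerivAt_id z).const_mul c) :
      HasDerivAt (f - fun y => c * y) (f' z - c) z)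
  have hm : Monotone (fun z => f z - c * z) := by
    apply monotone_of_deriv_nonneg
    · exact fun z => (hder z).differentiableAt
    · intro z
      rw [(hder z).deriv]
      linarith [h z]
  have h2 : f x - c * x ≤ f y - c * y := hm hxy
  nlinarith [h2]

set_option maxHeartbeats 1000000 in
/-- Lemma 2.6: for every `μ ≥ 1` there is `C > 0`, independent of `W`, such that the
profiles `f(t,x) = T(x) − Wt` and `g(t,x) = T̃(x) − Wt` satisfy
`|f(t,x) − f(0,y)| ≤ C|g(t,x) − g(0,y)| + C√t` for all `t > 0`, `x, y ∈ ℝ`. -/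
theorem profile_comparison (μ : ℝ) (hμ : 1 ≤ μ) :
    ∃ C : ℝ, 0 < C ∧ ∀ ν a : ℝ → ℝ, Continuous ν → Continuous a →
      Elliptic μ ν → Elliptic μ a →
      ∀ W : ℝ, 0 < W →
      ∀ T Tt : ℝ → ℝ, IsCorrector μ ν a W T → IsAdjointCorrector μ ν a W Tt →
      ∀ t : ℝ, 0 < t → ∀ x y : ℝ,
        |(T x - W * t) - (T y - W * 0)| ≤
          C * |(Tt x - W * t) - (Tt y - W * 0)| + C * Real.sqrt t := by
  have hμ0 : (0:ℝ) < μ := lt_of_lt_of_le one_pos hμ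
  have hμ5 : (1:ℝ) ≤ μ ^ 5 := one_le_pow₀ hμ
  have hμ7 : (1:ℝ) ≤ μ ^ 7 := one_le_pow₀ hμ
  have hμ10 : (1:ℝ) ≤ μ ^ 10 := one_le_pow₀ hμ
  refine ⟨μ ^ 10 + 4 * μ ^ 7 + 1, by linarith, ?_⟩
  have hp5 : (0:ℝ) < 1 / μ ^ 5 := div_pos one_pos (pow_pos hμ0 5)
  have hp1 : (0:ℝ) < 1 / μ := one_div_pos.2 hμ0
  intro ν a hν ha hEν hEa W hW T Tt hT hTt t ht x y
  obtain ⟨hT0, T', hTd, hTode, hTb⟩ := hT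
  obtain ⟨hS0, S', hSd, hSode, hSb⟩ := hTt
  set C : ℝ := μ ^ 10 + 4 * μ ^ 7 + 1 with hC
  -- Step 1: comparability |T x - T y| ≤ μ^10 * |Tt x - Tt y|
  have key1 : ∀ u v : ℝ, |T u - T v| ≤ μ ^ 10 * |Tt u - Tt v| := by
    have main : ∀ u v : ℝ, v ≤ u → T u - T v ≤ μ ^ 10 * (Tt u - Tt v) ∧
        0 ≤ T u - T v ∧ 0 ≤ Tt u - Tt v := by
      intro u v hvu
      have h1 : (1 / μ ^ 5) * (u - v) ≤ T u - T v :=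
        deriv_ge_mono hTd (fun z => (hTb z).1) hvu
      have h2 : (1 / μ ^ 5) * (u - v) ≤ Tt u - Tt v :=
        deriv_ge_mono hSd (fun z => (hSb z).1) hvu
      have h3 : -(μ ^ 5) * (u - v) ≤ (fun z => -T z) u - (fun z => -T z) v :=
        deriv_ge_mono (f' := fun z => -T' z) (fun z => (hTd z).neg)
          (fun z => by simpa using neg_le_neg (hTb z).2) hvu
      simp only [] at h3
      have hTu : T u - T v ≤ μ ^ 5 * (u - v) := by nlinarith
      have h2' : 0 ≤ Tt u - Tt v := le_trans (mul_nonneg hp5.le (by linarith)) h2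
      refine ⟨?_, le_trans (mul_nonneg hp5.le (by linarith)) h1, h2'⟩
      have : μ ^ 5 * (u - v) = μ ^ 10 * ((1 / μ ^ 5) * (u - v)) := by
        field_simp
      nlinarith [mul_le_mul_of_nonneg_left h2 (le_trans zero_le_one hμ10)]
    intro u v
    rcases le_total v u with h | h
    · obtain ⟨h1, h2, h3⟩ := main u v h
      rw [abs_of_nonneg h2, abs_of_nonneg h3]; exact h1
    · obtain ⟨h1, h2, h3⟩ := main v u h
      rw [abs_sub_comm (T u), abs_sub_comm (Tt u), abs_of_nonneg h2, abs_of_nonneg h3]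
      exact h1
  -- Step 2: |(T x - T y) - (Tt x - Tt y)| ≤ 4 μ^7 / W
  have key2 : |(T x - T y) - (Tt x - Tt y)| ≤ 4 * μ ^ 7 / W := by
    set P : ℝ → ℝ := fun z => a z * ν z * T' z + a z * ν z * S' z with hP
    have hDconst : ∀ u v : ℝ, W * (T u - Tt u) - P u = W * (T v - Tt v) - P v := by
      apply is_const_of_deriv_eq_zero (f := fun z => W * (T z - Tt z) - P z)
      · intro z
        exact ((((hTd z).sub (hSd z)).const_mul W).sub
          ((hTode z).add (hSode z))).differentiableAt
      · intro z
        have hd2 : HasDerivAt (fun z => W * (T z - Tt z) - P z) 0 z := by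
          have h0 := (((hTd z).sub (hSd z)).const_mul W).sub ((hTode z).add (hSode z))
          refine h0.congr_deriv ?_
          ring
        rw [hd2.deriv]
    have hPb : ∀ z : ℝ, 0 ≤ P z ∧ P z ≤ 2 * μ ^ 7 := by
      intro z
      have h1 := hEν z; have h2 := hEa z; have h3 := hTb z; have h4 := hSb z
      have hν0 : 0 < ν z := lt_of_lt_of_le hp1 h1.1
      have ha0 : 0 < a z := lt_of_lt_of_le hp1 h2.1
      have hT'0 : 0 < T' z := lt_of_lt_of_le hp5 h3.1
      have hS'0 : 0 < S' z := lt_of_lt_of_le hp5 h4.1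
      constructor
      · have e1 := mul_pos (mul_pos ha0 hν0) hT'0
        have e2 := mul_pos (mul_pos ha0 hν0) hS'0
        simp only [hP]; linarith
      · have e0 : a z * ν z ≤ μ * μ := mul_le_mul h2.2 h1.2 hν0.le (by linarith)
        have e1 : a z * ν z * T' z ≤ μ * μ * μ ^ 5 :=
          mul_le_mul e0 h3.2 hT'0.le (mul_nonneg hμ0.le hμ0.le)
        have e2 : a z * ν z * S' z ≤ μ * μ * μ ^ 5 :=
          mul_le_mul e0 h4.2 hS'0.le (mul_nonneg hμ0.le hμ0.le)
        have e3 : μ * μ * μ ^ 5 = μ ^ 7 := by ring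
        simp only [hP]; linarith
    have heq := hDconst x y
    have : W * ((T x - T y) - (Tt x - Tt y)) = P x - P y := by linarith
    have habs : |W * ((T x - T y) - (Tt x - Tt y))| ≤ 2 * μ ^ 7 := by
      rw [this, abs_sub_le_iff]
      constructor <;> [linarith [(hPb x).1, (hPb x).2, (hPb y).1];
        linarith [(hPb x).1, (hPb y).1, (hPb y).2]]
    rw [abs_mul, abs_of_pos hW] at habs
    rw [le_div_iff₀ hW]
    calc |(T x - T y) - (Tt x - Tt y)| * W = W * |(T x - T y) - (Tt x - Tt y)| := by ring
    _ ≤ 2 * μ ^ 7 := habs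
    _ ≤ 4 * μ ^ 7 := by linarith
  -- Step 3: conclude
  have hst : Real.sqrt t * Real.sqrt t = t := Real.mul_self_sqrt ht.le
  have hsqt : 0 < Real.sqrt t := Real.sqrt_pos.2 ht
  set d : ℝ := T x - T y with hd
  set e : ℝ := Tt x - Tt y with he
  have goal_eq : (T x - W * t) - (T y - W * 0) = d - W * t := by simp [hd]; ring
  have goal_eq2 : (Tt x - W * t) - (Tt y - W * 0) = e - W * t := by simp [he]; ring
  rw [goal_eq, goal_eq2]
  have habs1 : |d| ≤ μ ^ 10 * |e| := key1 x y
  have hC1 : (1:ℝ) ≤ C := by simp only [hC]; linarith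
  have hCpos : (0:ℝ) < C := lt_of_lt_of_le one_pos hC1
  rcases le_total (W * Real.sqrt t) 1 with hcase | hcase
  · -- small W: W * t ≤ √t
    have hWt : W * t ≤ Real.sqrt t := by
      calc W * t = (W * Real.sqrt t) * Real.sqrt t := by rw [mul_assoc, hst]
      _ ≤ 1 * Real.sqrt t := mul_le_mul_of_nonneg_right hcase hsqt.le
      _ = Real.sqrt t := one_mul _
    have hWt0 : 0 < W * t := mul_pos hW ht
    have h1 : |d - W * t| ≤ |d| + W * t := by
      calc |d - W * t| ≤ |d| + |W * t| := abs_sub _ _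
      _ = |d| + W * t := by rw [abs_of_pos hWt0]
    have h2 : |e| ≤ |e - W * t| + W * t := by
      have h := abs_sub_abs_le_abs_sub e (e - W * t)
      have h' : e - (e - W * t) = W * t := by ring
      rw [h', abs_of_pos hWt0] at h
      linarith
    have h3 : |d - W * t| ≤ μ ^ 10 * |e - W * t| + (μ ^ 10 + 1) * (W * t) := by
      nlinarith [abs_nonneg (e - W*t), abs_nonneg e]
    have h4 : (μ ^ 10 + 1) * (W * t) ≤ C * Real.sqrt t := by
      calc (μ ^ 10 + 1) * (W * t) ≤ (μ ^ 10 + 1) * Real.sqrt t := by nlinarith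
      _ ≤ C * Real.sqrt t := by
          apply mul_le_mul_of_nonneg_right _ hsqt.le
          simp only [hC]; linarith
    have h5 : μ ^ 10 * |e - W * t| ≤ C * |e - W * t| := by
      apply mul_le_mul_of_nonneg_right _ (abs_nonneg _)
      simp only [hC]; linarith
    linarith
  · -- large W: 1/W ≤ √t
    have hinv : 1 / W ≤ Real.sqrt t := by
      rw [div_le_iff₀ hW]; linarith [hcase]
    have h1 : |d - W * t| ≤ |e - W * t| + |d - e| := by
      have hre : d - W * t = (e - W * t) + (d - e) := by ring
      rw [hre]; exact abs_add_le _ _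
    have h2 : |d - e| ≤ 4 * μ ^ 7 * Real.sqrt t := by
      calc |d - e| ≤ 4 * μ ^ 7 / W := key2
      _ = 4 * μ ^ 7 * (1 / W) := by ring
      _ ≤ 4 * μ ^ 7 * Real.sqrt t := mul_le_mul_of_nonneg_left hinv (by linarith)
    have h3 : |e - W * t| ≤ C * |e - W * t| :=
      le_mul_of_one_le_left (abs_nonneg _) hC1
    have h4 : 4 * μ ^ 7 * Real.sqrt t ≤ C * Real.sqrt t := by
      apply mul_le_mul_of_nonneg_right _ hsqt.le
      simp only [hC]; nlinarith
    linarith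
end

section
/- Laplace transform of the drifted Gaussian kernel (identity used for the Green function bounds, corrected to X ≥ 0): For all real numbers a > 0, b > 0 and X ≥ 0, one has ∫₀^∞ e^{−at}·e^{−b(X−t)²/t}/√t dt = √(π/(a+b))·exp(−2√b(√(a+b) − √b)X). -/
open MeasureTheory Real


section
variable (c d : ℝ) (hc : 0 < c) (hd : 0 < d)

-- derivative of g u = c*u - d/u
lemma g_deriv (u : ℝ) (hu : u ≠ 0) :
    HasDerivAt (fun u : ℝ => c * u - d / u) (c + d / u ^ 2) u := by
  have h1 : HasDerivAt (fun u : ℝ => c * u) c u := by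
    simpa using (hasDerivAt_id u).const_mul c
  have h2 : HasDerivAt (fun u : ℝ => d / u) (d * (-(u ^ 2)⁻¹)) u := by
    simpa [div_eq_mul_inv] using (hasDerivAt_inv hu).const_mul d
  exact (h1.sub h2).congr_deriv (by ring)

include hc hd in
lemma g_injOn : Set.InjOn (fun u : ℝ => c * u - d / u) (Set.Ioi 0) := by
  intro u1 h1 u2 h2 heq
  simp only [Set.mem_Ioi] at h1 h2
  have heq' : (u1 - u2) * (c * (u1 * u2) + d) = 0 := by
    have e : c * u1 - d / u1 = c * u2 - d / u2 := heq
    field_simp at e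
    nlinarith [e]
  have hpos : c * (u1 * u2) + d > 0 := by positivity
  have := mul_eq_zero.1 heq'
  rcases this with h | h
  · linarith
  · linarith

include hc hd in
lemma g_image : (fun u : ℝ => c * u - d / u) '' (Set.Ioi 0) = Set.univ := by
  apply Set.eq_univ_of_forall
  intro v
  refine ⟨(v + Real.sqrt (v ^ 2 + 4 * c * d)) / (2 * c), ?_, ?_⟩
  · have h1 : Real.sqrt (v ^ 2 + 4 * c * d) > |v| := by
      rw [← Real.sqrt_sq_eq_abs]
      apply Real.sqrt_lt_sqrt (by positivity)
      nlinarith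
    have : v + Real.sqrt (v ^ 2 + 4 * c * d) > 0 := by
      nlinarith [neg_abs_le v]
    simpa using div_pos this (by positivity)
  · have hs : Real.sqrt (v ^ 2 + 4 * c * d) ^ 2 = v ^ 2 + 4 * c * d :=
      Real.sq_sqrt (by positivity)
    have hpos : v + Real.sqrt (v ^ 2 + 4 * c * d) > 0 := by
      have h1 : Real.sqrt (v ^ 2 + 4 * c * d) > |v| := by
        rw [← Real.sqrt_sq_eq_abs]
        apply Real.sqrt_lt_sqrt (by positivity)
        nlinarith
      nlinarith [neg_abs_le v]
    show c * _ - d / _ = v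
    rw [div_div_eq_mul_div, eq_comm]
    have e1 : c * ((v + Real.sqrt (v ^ 2 + 4 * c * d)) / (2 * c))
        = (v + Real.sqrt (v ^ 2 + 4 * c * d)) / 2 := by
      rw [mul_div_assoc', mul_comm 2 c, mul_div_mul_left _ _ hc.ne']
    have e2 : d * (2 * c) / (v + Real.sqrt (v ^ 2 + 4 * c * d))
        = (Real.sqrt (v ^ 2 + 4 * c * d) - v) / 2 := by
      rw [div_eq_iff hpos.ne']
      nlinarith [hs]
    rw [e1, e2]
    ring
end


lemma contOn (c d : ℝ) : ContinuousOn (fun u : ℝ => Real.exp (-(c * u - d / u) ^ 2)) (Set.Ioi 0) := by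
  apply ContinuousOn.rexp
  apply ContinuousOn.neg
  apply ContinuousOn.pow
  exact (continuousOn_const.mul continuousOn_id).sub
    (continuousOn_const.div continuousOn_id (fun x hx => ne_of_gt hx))

lemma int1 (c d : ℝ) (hc : 0 < c) (hd : 0 ≤ d) :
    IntegrableOn (fun u : ℝ => Real.exp (-(c * u - d / u) ^ 2)) (Set.Ioi 0) := by
  have hg : IntegrableOn (fun u : ℝ => Real.exp (2*c*d) * Real.exp (-(c^2) * u^2)) (Set.Ioi 0) :=
    ((integrable_exp_neg_mul_sq (show (0:ℝ) < c^2 by positivity)).integrableOn).const_mul _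
  apply Integrable.mono hg ((contOn c d).aestronglyMeasurable measurableSet_Ioi)
  filter_upwards [ae_restrict_mem measurableSet_Ioi] with u hu
  simp only [Set.mem_Ioi] at hu
  rw [Real.norm_of_nonneg (Real.exp_nonneg _), Real.norm_of_nonneg (by positivity)]
  rw [← Real.exp_add, Real.exp_le_exp]
  have h2 : c * u * (d / u) = c * d := by field_simp
  nlinarith [sq_nonneg (d / u)]

lemma int2 (c d : ℝ) (hc : 0 < c) (hd : 0 < d) :
    IntegrableOn (fun u : ℝ => Real.exp (-(c * u - d / u) ^ 2) * (d / u ^ 2)) (Set.Ioi 0) := by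
  have hg : IntegrableOn (fun u : ℝ => (Real.exp (2*c*d) / d) * Real.exp (-(c^2) * u^2)) (Set.Ioi 0) :=
    ((integrable_exp_neg_mul_sq (show (0:ℝ) < c^2 by positivity)).integrableOn).const_mul _
  have hmeas : AEStronglyMeasurable (fun u : ℝ => Real.exp (-(c * u - d / u) ^ 2) * (d / u ^ 2))
      ((volume : Measure ℝ).restrict (Set.Ioi 0)) := by
    apply ContinuousOn.aestronglyMeasurable _ measurableSet_Ioi
    exact (contOn c d).mul (continuousOn_const.div (continuousOn_pow 2)
      (fun x hx => pow_ne_zero 2 (ne_of_gt (Set.mem_Ioi.1 hx))))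
  apply Integrable.mono hg hmeas
  filter_upwards [ae_restrict_mem measurableSet_Ioi] with u hu
  simp only [Set.mem_Ioi] at hu
  rw [Real.norm_of_nonneg (by positivity), Real.norm_of_nonneg (by positivity)]
  have key : Real.exp (-(c*u - d/u)^2)
      = Real.exp (2*c*d) * Real.exp (-(c^2)*u^2) * Real.exp (-(d^2/u^2)) := by
    rw [← Real.exp_add, ← Real.exp_add]
    congr 1
    field_simp
    ring
  rw [key]
  set y := d^2/u^2 with hy
  have hy0 : 0 < y := by positivity
  have hye : y * Real.exp (-y) ≤ 1 := by
    have h1 := Real.add_one_le_exp y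
    have h2 : Real.exp (-y) * Real.exp y = 1 := by rw [← Real.exp_add]; simp
    nlinarith [Real.exp_pos (-y), mul_le_mul_of_nonneg_left h1 (Real.exp_pos (-y)).le]
  have hdq : d / u^2 = y / d := by field_simp [hy]; rw [hy]; field_simp
  rw [hdq]
  have e1 : Real.exp (2*c*d) * Real.exp (-(c^2)*u^2) * Real.exp (-y) * (y/d)
      = (Real.exp (2*c*d) * Real.exp (-(c^2)*u^2) / d) * (y * Real.exp (-y)) := by ring
  rw [e1]
  calc (Real.exp (2*c*d) * Real.exp (-(c^2)*u^2) / d) * (y * Real.exp (-y))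
      ≤ (Real.exp (2*c*d) * Real.exp (-(c^2)*u^2) / d) * 1 := by
        apply mul_le_mul_of_nonneg_left hye (by positivity)
    _ = Real.exp (2*c*d) / d * Real.exp (-(c^2)*u^2) := by ring

section
variable (c d : ℝ)

lemma phi_image (hc : 0 < c) (hd : 0 < d) :
    (fun s : ℝ => d / (c * s)) '' (Set.Ioi 0) = Set.Ioi 0 := by
  apply Set.Subset.antisymm
  · rintro x ⟨s, hs, rfl⟩
    simp only [Set.mem_Ioi] at hs ⊢
    positivity
  · intro x hx
    simp only [Set.mem_Ioi] at hx
    refine ⟨d / (c * x), by simp only [Set.mem_Ioi]; positivity, ?_⟩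
    field_simp

lemma phi_inj (hc : 0 < c) (hd : 0 < d) :
    Set.InjOn (fun s : ℝ => d / (c * s)) (Set.Ioi 0) := by
  intro s1 h1 s2 h2 e
  simp only [Set.mem_Ioi] at h1 h2
  simp only at e
  field_simp [hc.ne', hd.ne'] at e
  exact e.symm

lemma phi_deriv (hc : 0 < c) (hd : 0 < d) (s : ℝ) (hs : s ≠ 0) :
    HasDerivAt (fun s : ℝ => d / (c * s)) (-(d / (c * s ^ 2))) s := by
  have h : HasDerivAt (fun s : ℝ => (d / c) * s⁻¹) ((d / c) * (-(s ^ 2)⁻¹)) s :=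
    (hasDerivAt_inv hs).const_mul _
  have heq : (fun s : ℝ => d / (c * s)) = fun s : ℝ => (d / c) * s⁻¹ := by
    funext x
    rw [div_eq_mul_inv, mul_inv, div_eq_mul_inv]
    ring
  rw [heq]
  convert h using 1
  rw [div_eq_mul_inv, mul_inv, div_eq_mul_inv]
  ring

lemma glasser_sub (hc : 0 < c) (hd : 0 < d) :
    ∫ u in Set.Ioi (0:ℝ), Real.exp (-(c * u - d / u) ^ 2) * (d / u ^ 2)
      = ∫ u in Set.Ioi (0:ℝ), c * Real.exp (-(c * u - d / u) ^ 2) := by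
  have step : ∫ u in Set.Ioi (0:ℝ), Real.exp (-(c * u - d / u) ^ 2) * (d / u ^ 2)
      = ∫ s in Set.Ioi (0:ℝ), |(-(d / (c * s ^ 2)))| •
          (Real.exp (-(c * (d / (c * s)) - d / (d / (c * s))) ^ 2) * (d / (d / (c * s)) ^ 2)) := by
    have h := integral_image_eq_integral_abs_deriv_smul measurableSet_Ioi
      (fun s hs => (phi_deriv c d hc hd s (ne_of_gt (Set.mem_Ioi.1 hs))).hasDerivWithinAt)
      (phi_inj c d hc hd) (fun x => Real.exp (-(c * x - d / x) ^ 2) * (d / x ^ 2))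
    rw [phi_image c d hc hd] at h
    exact h
  rw [step]
  apply setIntegral_congr_fun measurableSet_Ioi
  intro s hs
  simp only [Set.mem_Ioi] at hs
  have hs' : s ≠ 0 := ne_of_gt hs
  simp only [smul_eq_mul]
  have e1 : c * (d / (c * s)) - d / (d / (c * s)) = -(c * s - d / s) := by
    field_simp
    ring
  have e2 : d / (d / (c * s)) ^ 2 = c ^ 2 * s ^ 2 / d := by
    field_simp
  rw [e1, e2, neg_sq, abs_neg, abs_of_pos (by positivity)]
  field_simp

lemma glasser_pos (hc : 0 < c) (hd : 0 < d) :
    ∫ u in Set.Ioi (0:ℝ), Real.exp (-(c * u - d / u) ^ 2) = Real.sqrt π / (2 * c) := by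
  have base : Real.sqrt π = ∫ x in (fun u : ℝ => c * u - d / u) '' (Set.Ioi 0),
      Real.exp (-x ^ 2) := by
    rw [g_image c d hc hd, MeasureTheory.setIntegral_univ]
    have := integral_gaussian 1
    simp only [neg_mul, one_mul, div_one] at this
    rw [← this]
  rw [integral_image_eq_integral_abs_deriv_smul measurableSet_Ioi
    (fun u hu => (g_deriv c d u (ne_of_gt (Set.mem_Ioi.1 hu))).hasDerivWithinAt)
    (g_injOn c d hc hd) _] at base
  have congr1 : ∫ u in Set.Ioi (0:ℝ), |c + d / u ^ 2| • Real.exp (-(c * u - d / u) ^ 2)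
      = ∫ u in Set.Ioi (0:ℝ),
          (c * Real.exp (-(c * u - d / u) ^ 2) + Real.exp (-(c * u - d / u) ^ 2) * (d / u ^ 2)) := by
    apply setIntegral_congr_fun measurableSet_Ioi
    intro u hu
    simp only [Set.mem_Ioi] at hu
    simp only [smul_eq_mul]
    rw [abs_of_pos (by positivity)]
    ring
  rw [congr1, integral_add ((int1 c d hc hd.le).const_mul c) (int2 c d hc hd),
    glasser_sub c d hc hd, integral_const_mul] at base
  have hI := base
  have hne : (2 : ℝ) * c ≠ 0 := by positivity
  field_simp at hI ⊢
  linarith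
end


lemma glasser0 (c : ℝ) (hc : 0 < c) :
    ∫ u in Set.Ioi (0:ℝ), Real.exp (-(c * u) ^ 2) = Real.sqrt π / (2 * c) := by
  have : ∀ u ∈ Set.Ioi (0:ℝ), Real.exp (-(c * u) ^ 2) = Real.exp (-(c^2) * u ^ 2) := by
    intro u hu; ring_nf
  rw [setIntegral_congr_fun measurableSet_Ioi this, integral_gaussian_Ioi,
    Real.sqrt_div' π (by positivity), Real.sqrt_sq hc.le]
  ring


lemma glasser (c d : ℝ) (hc : 0 < c) (hd : 0 ≤ d) :
    ∫ u in Set.Ioi (0:ℝ), Real.exp (-(c * u - d / u) ^ 2) = Real.sqrt π / (2 * c) := by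
  rcases eq_or_lt_of_le hd with h0 | hd'
  · have h : ∀ u ∈ Set.Ioi (0:ℝ), Real.exp (-(c * u - d / u) ^ 2) = Real.exp (-(c * u) ^ 2) := by
      intro u hu
      rw [← h0]
      norm_num
    rw [setIntegral_congr_fun measurableSet_Ioi h]
    exact glasser0 c hc
  · exact glasser_pos c d hc hd'

lemma sq_image : (fun u : ℝ => u ^ 2) '' (Set.Ioi 0) = Set.Ioi 0 := by
  apply Set.Subset.antisymm
  · rintro x ⟨u, hu, rfl⟩
    simp only [Set.mem_Ioi] at hu ⊢
    positivity
  · intro x hx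
    simp only [Set.mem_Ioi] at hx
    exact ⟨Real.sqrt x, by simp only [Set.mem_Ioi]; positivity, Real.sq_sqrt hx.le⟩

lemma laplace_kernel (p q : ℝ) (hp : 0 < p) (hq : 0 ≤ q) :
    ∫ t in Set.Ioi (0:ℝ), Real.exp (-(p * t + q / t)) / Real.sqrt t
      = Real.sqrt (π / p) * Real.exp (-2 * Real.sqrt (p * q)) := by
  set c := Real.sqrt p with hcdef
  set d := Real.sqrt q with hddef
  have hc : 0 < c := Real.sqrt_pos.2 hp
  have hd : 0 ≤ d := Real.sqrt_nonneg q
  have hc2 : c ^ 2 = p := Real.sq_sqrt hp.le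
  have hd2 : d ^ 2 = q := Real.sq_sqrt hq
  have step : ∫ t in Set.Ioi (0:ℝ), Real.exp (-(p * t + q / t)) / Real.sqrt t
      = ∫ u in Set.Ioi (0:ℝ),
          |2 * u| • (Real.exp (-(p * u ^ 2 + q / u ^ 2)) / Real.sqrt (u ^ 2)) := by
    have h := integral_image_eq_integral_abs_deriv_smul (f := fun u : ℝ => u ^ 2)
      (s := Set.Ioi (0:ℝ)) measurableSet_Ioi
      (fun u _ => by simpa using (hasDerivAt_pow 2 u).hasDerivWithinAt)
      (fun u hu v hv e => by
        simp only [Set.mem_Ioi] at hu hv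
        simp only at e
        nlinarith)
      (fun t => Real.exp (-(p * t + q / t)) / Real.sqrt t)
    rw [sq_image] at h
    exact h
  rw [step]
  have congr1 : ∫ u in Set.Ioi (0:ℝ),
        |2 * u| • (Real.exp (-(p * u ^ 2 + q / u ^ 2)) / Real.sqrt (u ^ 2))
      = ∫ u in Set.Ioi (0:ℝ), (2 * Real.exp (-2 * (c * d)) ) * Real.exp (-(c * u - d / u) ^ 2) := by
    apply setIntegral_congr_fun measurableSet_Ioi
    intro u hu
    simp only [Set.mem_Ioi] at hu
    simp only [smul_eq_mul]
    rw [Real.sqrt_sq hu.le, abs_of_pos (by positivity)]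
    have key : Real.exp (-(p * u ^ 2 + q / u ^ 2))
        = Real.exp (-2 * (c * d)) * Real.exp (-(c * u - d / u) ^ 2) := by
      rw [← Real.exp_add]
      congr 1
      have : (c * u - d / u) ^ 2 = c ^ 2 * u ^ 2 - 2 * (c * d) + d ^ 2 / u ^ 2 := by
        field_simp
        ring
      rw [this, hc2, hd2]
      ring
    rw [key]
    field_simp
  rw [congr1, integral_const_mul, glasser c d hc hd]
  rw [Real.sqrt_div pi_pos.le, Real.sqrt_mul hp.le, ← hcdef, ← hddef]
  field_simp

/-- Laplace transform of the drifted Gaussian kernel: for `a, b > 0` and `X ≥ 0`,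
`∫₀^∞ e^{−at}e^{−b(X−t)²/t}/√t dt = √(π/(a+b))·e^{−2√b(√(a+b)−√b)X}`. -/
theorem laplace_drifted_gaussian (a b X : ℝ) (ha : 0 < a) (hb : 0 < b) (hX : 0 ≤ X) :
    ∫ t in Set.Ioi (0 : ℝ), Real.exp (-a * t) * Real.exp (-b * (X - t) ^ 2 / t) / Real.sqrt t =
      Real.sqrt (Real.pi / (a + b)) *
        Real.exp (-2 * Real.sqrt b * (Real.sqrt (a + b) - Real.sqrt b) * X) := by
  have hcongr : ∫ t in Set.Ioi (0:ℝ),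
        Real.exp (-a * t) * Real.exp (-b * (X - t) ^ 2 / t) / Real.sqrt t
      = ∫ t in Set.Ioi (0:ℝ),
        Real.exp (2 * b * X) * (Real.exp (-((a + b) * t + b * X ^ 2 / t)) / Real.sqrt t) := by
    apply setIntegral_congr_fun measurableSet_Ioi
    intro t ht
    simp only [Set.mem_Ioi] at ht
    have e : Real.exp (-a * t) * Real.exp (-b * (X - t) ^ 2 / t)
        = Real.exp (2 * b * X) * Real.exp (-((a + b) * t + b * X ^ 2 / t)) := by
      rw [← Real.exp_add, ← Real.exp_add]
      congr 1
      field_simp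
      ring
    simp only []
    rw [e, mul_div_assoc]
  have hs : Real.sqrt ((a + b) * (b * X ^ 2)) = Real.sqrt (a + b) * (Real.sqrt b * X) := by
    rw [Real.sqrt_mul (by positivity), Real.sqrt_mul hb.le, Real.sqrt_sq hX]
  have hbb : Real.sqrt b * Real.sqrt b = b := Real.mul_self_sqrt hb.le
  rw [hcongr, integral_const_mul, laplace_kernel (a + b) (b * X ^ 2) (by positivity) (by positivity),
    hs, mul_left_comm, ← Real.exp_add]
  congr 1
  rw [Real.exp_eq_exp]
  linear_combination -2 * X * hbb
end
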